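/- Lower bound for unrolling (Proposition 4.1, polynomial form): Let 0 < ℓ < L, κ = ℓ/L, ξ = (1-√κ)/(1+√κ), and let t be a natural number. For every real polynomial P with P.natDegree ≤ t and P.eval 0 = 1, setting Q = P - X · P.derivative (the Jacobian-error polynomial of the first-order method with residual polynomial P, which satisfies Q.eval 0 = 1 and Q.derivative.eval 0 = 0), there exists λ ∈ [ℓ, L] such that |Q.eval λ| ≥ 2/(ξ^t + ξ^(-t)). Consequently, for every dimension d ≥ 1 there exist a symmetric matrix H with ℓ•1 ≼ H ≼ L•1 (in the Loewner order) and a nonzero vector v with ‖((Polynomial.aeval H) Q).mulVec v‖ ≥ (2/(ξ^t + ξ^(-t))) · ‖v‖. -/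

import Mathlib

open Polynomial Matrix

/-- The Euclidean norm on `Fin d → ℝ`. -/
noncomputable def euclNorm {d : ℕ} (v : Fin d → ℝ) : ℝ := Real.sqrt (∑ i, v i ^ 2)

namespace UnrollAux
open Polynomial.Chebyshev Real

lemma cos_nat_pi (k : ℕ) : Real.cos (k * π) = (-1) ^ k := by
  have := Real.cos_nat_mul_pi_sub 0 k
  simpa using this

lemma T_natDegree_le : ∀ n : ℕ, (T ℝ n).natDegree ≤ n := by
  have key : ∀ n : ℕ, (T ℝ n).natDegree ≤ n ∧ (T ℝ (n+1:ℕ)).natDegree ≤ n+1 := by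
    intro n
    induction n with
    | zero => constructor <;> simp [T_zero, T_one]
    | succ m ih =>
      refine ⟨ih.2, ?_⟩
      have hrec : (T ℝ (m+2:ℕ)) = 2 * X * T ℝ (m+1:ℕ) - T ℝ (m:ℕ) := by
        have := T_add_two ℝ (m : ℤ)
        push_cast
        convert this using 2 <;> push_cast <;> ring
      rw [hrec]
      refine (natDegree_sub_le _ _).trans ?_
      have h1 : (2 * X * T ℝ (m+1:ℕ)).natDegree ≤ m + 2 := by
        refine (natDegree_mul_le).trans ?_
        have h2 : ((2 : ℝ[X]) * X).natDegree ≤ 1 := by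
          refine (natDegree_mul_le).trans ?_
          simp
        have := ih.2
        omega
      have h0 := ih.1
      omega
  exact fun n => (key n).1

lemma cheb_lower (a b : ℝ) (ha : 0 < a) (hab : a < b) (t : ℕ) (ht : 1 ≤ t)
    (Q : ℝ[X]) (hdeg : Q.natDegree ≤ t) (hQ0 : Q.eval 0 = 1)
    (c : ℝ) (hc : 0 < c) (hcM : c * (T ℝ t).eval ((b + a) / (b - a)) = 1) :
    ∃ lam ∈ Set.Icc a b, c ≤ |Q.eval lam| := by
  by_contra hcon
  push_neg at hcon
  have hba : (0:ℝ) < b - a := by linarith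
  have htR : (0:ℝ) < t := by exact_mod_cast ht
  set lam : ℕ → ℝ := fun k => (b + a) / 2 - ((b - a) / 2) * Real.cos (k * π / t) with hlamdef
  -- membership of angles
  have hang : ∀ k : ℕ, k ≤ t → (k * π / t) ∈ Set.Icc (0:ℝ) π := by
    intro k hk
    constructor
    · positivity
    · rw [div_le_iff₀ htR]
      have : (k:ℝ) ≤ t := by exact_mod_cast hk
      nlinarith [Real.pi_pos]
  have hlam_mono : ∀ i j : ℕ, i < j → j ≤ t → lam i < lam j := by
    intro i j hij hj
    have h1 : Real.cos (j * π / t) < Real.cos (i * π / t) := by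
      apply Real.strictAntiOn_cos (hang i (by omega)) (hang j hj)
      have : (i:ℝ) < j := by exact_mod_cast hij
      rw [div_lt_div_iff₀ htR htR]
      exact mul_lt_mul_of_pos_right (mul_lt_mul_of_pos_right this Real.pi_pos) htR
    simp only [hlamdef]
    nlinarith
  have hlam_mem : ∀ k : ℕ, k ≤ t → lam k ∈ Set.Icc a b := by
    intro k hk
    have h1 := Real.neg_one_le_cos (k * π / t)
    have h2 := Real.cos_le_one (k * π / t)
    constructor <;> simp only [hlamdef] <;> nlinarith
  have hlam0 : lam 0 = a := by simp [hlamdef]; ring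
  -- the linear substitution polynomial
  set g : ℝ[X] := C ((b + a) / (b - a)) - C (2 / (b - a)) * X with hgdef
  have hgeval : ∀ x : ℝ, g.eval x = (b + a - 2 * x) / (b - a) := by
    intro x
    simp only [hgdef, eval_sub, eval_mul, eval_C, eval_X]
    field_simp
  have hglam : ∀ k : ℕ, g.eval (lam k) = Real.cos (k * π / t) := by
    intro k
    rw [hgeval]
    simp only [hlamdef]
    field_simp
    ring
  set Cp : ℝ[X] := C c * ((T ℝ t).comp g) with hCpdef
  have hCpeval : ∀ x : ℝ, Cp.eval x = c * (T ℝ t).eval (g.eval x) := by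
    intro x; simp [hCpdef, eval_comp]
  set R : ℝ[X] := Cp - Q with hRdef
  have hRdeg : R.natDegree ≤ t := by
    refine (natDegree_sub_le _ _).trans ?_
    have h1 : Cp.natDegree ≤ t := by
      refine natDegree_mul_le.trans ?_
      have h2 : ((T ℝ t).comp g).natDegree ≤ (T ℝ (t:ℕ)).natDegree * g.natDegree :=
        natDegree_comp_le
      have h3 : g.natDegree ≤ 1 := by
        refine (natDegree_sub_le _ _).trans ?_
        have : (C (2 / (b - a)) * X).natDegree ≤ 1 := by
          refine natDegree_mul_le.trans ?_; simp
        simp_all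
      have h4 := T_natDegree_le t
      have := h2.trans (Nat.mul_le_mul h4 h3)
      simpa using this
    omega
  have hR0 : R.eval 0 = 0 := by
    have : g.eval 0 = (b + a) / (b - a) := by rw [hgeval]; ring_nf
    simp [hRdef, hCpeval, this, hQ0, hcM]
  have hTk : ∀ k : ℕ, (T ℝ t).eval (Real.cos (k * π / t)) = (-1) ^ k := by
    intro k
    have h1 := Polynomial.Chebyshev.T_real_cos (k * π / t) (t : ℤ)
    have h2 : ((t:ℤ):ℝ) * (k * π / t) = k * π := by
      push_cast
      field_simp
    rw [h2] at h1
    rw [h1, cos_nat_pi]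
  have hRk : ∀ k : ℕ, R.eval (lam k) = c * (-1) ^ k - Q.eval (lam k) := by
    intro k
    simp [hRdef, hCpeval, hglam, hTk]
  have hQlt : ∀ k : ℕ, k ≤ t → |Q.eval (lam k)| < c := fun k hk => hcon _ (hlam_mem k hk)
  have hpos : ∀ k : ℕ, k ≤ t → Even k → 0 < R.eval (lam k) := by
    intro k hk hke
    rw [hRk, hke.neg_one_pow]
    have := (abs_lt.mp (hQlt k hk)).2
    linarith
  have hneg : ∀ k : ℕ, k ≤ t → Odd k → R.eval (lam k) < 0 := by
    intro k hk hko
    rw [hRk, hko.neg_one_pow]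
    have := (abs_lt.mp (hQlt k hk)).1
    linarith
  -- roots in between
  have hex : ∀ k : Fin t, ∃ x, x ∈ Set.Ioo (lam k) (lam (k + 1)) ∧ R.eval x = 0 := by
    intro ⟨k, hk⟩
    simp only
    have hcont : ContinuousOn (fun x => R.eval x) (Set.Icc (lam k) (lam (k+1))) :=
      (R.continuous_aeval).continuousOn
    have hle : lam k ≤ lam (k+1) := le_of_lt (hlam_mono k (k+1) (by omega) (by omega))
    rcases Nat.even_or_odd k with hke | hko
    · have h1 : 0 < R.eval (lam k) := hpos k (by omega) hke
      have h2 : R.eval (lam (k+1)) < 0 := hneg (k+1) (by omega) (Even.add_one hke)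
      have := intermediate_value_Ioo' hle hcont (Set.mem_Ioo.mpr ⟨h2, h1⟩)
      obtain ⟨x, hx, hx0⟩ := this
      exact ⟨x, hx, hx0⟩
    · have h1 : R.eval (lam k) < 0 := hneg k (by omega) hko
      have h2 : 0 < R.eval (lam (k+1)) := hpos (k+1) (by omega) (Odd.add_one hko)
      have := intermediate_value_Ioo hle hcont (Set.mem_Ioo.mpr ⟨h1, h2⟩)
      obtain ⟨x, hx, hx0⟩ := this
      exact ⟨x, hx, hx0⟩
  choose r hrIoo hr0 using hex
  have hrmono : ∀ i j : Fin t, i < j → r i < r j := by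
    intro i j hij
    have h1 : r i < lam (i + 1) := (hrIoo i).2
    have h2 : lam j ≤ lam (j:ℕ) := le_refl _
    have h3 : lam ((i:ℕ) + 1) ≤ lam (j:ℕ) := by
      rcases Nat.lt_or_ge ((i:ℕ)+1) (j:ℕ) with h | h
      · exact le_of_lt (hlam_mono _ _ h (by omega))
      · have : (i:ℕ) + 1 = (j:ℕ) := by
          have := hij
          omega
        rw [this]
    have h4 : lam (j:ℕ) < r j := (hrIoo j).1
    linarith
  have hrinj : Function.Injective r := by
    intro i j h
    rcases lt_trichotomy i j with hlt | heq | hgt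
    · exact absurd h (ne_of_lt (hrmono i j hlt))
    · exact heq
    · exact absurd h.symm (ne_of_lt (hrmono j i hgt))
  have hrpos : ∀ i : Fin t, 0 < r i := by
    intro i
    have h1 : lam (i:ℕ) < r i := (hrIoo i).1
    have h2 : a ≤ lam (i:ℕ) := (hlam_mem (i:ℕ) (by omega)).1
    linarith
  classical
  set s : Finset ℝ := insert 0 (Finset.image r Finset.univ) with hsdef
  have hcard : s.card = t + 1 := by
    rw [hsdef, Finset.card_insert_of_notMem, Finset.card_image_of_injective _ hrinj,
      Finset.card_univ, Fintype.card_fin]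
    simp only [Finset.mem_image, Finset.mem_univ, true_and, not_exists]
    intro i hi
    exact absurd hi (ne_of_gt (hrpos i))
  have hRzero : R = 0 := by
    apply Polynomial.eq_zero_of_natDegree_lt_card_of_eval_eq_zero' R s
    · intro x hx
      rw [hsdef] at hx
      rcases Finset.mem_insert.mp hx with rfl | hx
      · exact hR0
      · obtain ⟨i, _, rfl⟩ := Finset.mem_image.mp hx
        exact hr0 i
    · omega
  have : 0 < R.eval (lam 0) := hpos 0 (by omega) Even.zero
  rw [hRzero] at this
  simp at this

lemma T_real_cosh (θ : ℝ) (n : ℤ) :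
    (T ℝ n).eval (Real.cosh θ) = Real.cosh (n * θ) := by
  have h := T_complex_cos (θ * Complex.I) n
  rw [Complex.cos_mul_I] at h
  have h2 : (n : ℂ) * (↑θ * Complex.I) = ((n * θ : ℝ) : ℂ) * Complex.I := by push_cast; ring
  rw [h2, Complex.cos_mul_I] at h
  have h3 : ((((T ℝ n).eval (Real.cosh θ)) : ℝ) : ℂ) = (T ℂ n).eval ((Real.cosh θ : ℝ) : ℂ) :=
    complex_ofReal_eval_T _ n
  rw [Complex.ofReal_cosh] at h3
  have := h3.trans h
  rw [← Complex.ofReal_cosh] at this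
  exact_mod_cast this


theorem euclNorm_smul {d : ℕ} (q : ℝ) (v : Fin d → ℝ) :
    euclNorm (q • v) = |q| * euclNorm v := by
  unfold euclNorm
  have : ∑ i, (q • v) i ^ 2 = q ^ 2 * ∑ i, v i ^ 2 := by
    rw [Finset.mul_sum]
    refine Finset.sum_congr rfl fun i _ => ?_
    simp [mul_pow]
  rw [this, Real.sqrt_mul (sq_nonneg q), Real.sqrt_sq_eq_abs]

end UnrollAux

open UnrollAux Polynomial.Chebyshev in
/-- Lower bound for unrolling (Proposition 4.1, polynomial form). -/
theorem unrolling_lower_bound (ℓ L κ ξ : ℝ) (hℓ : 0 < ℓ) (hℓL : ℓ < L)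
    (hκ : κ = ℓ / L) (hξ : ξ = (1 - Real.sqrt κ) / (1 + Real.sqrt κ))
    (t : ℕ) (P : Polynomial ℝ) (hdeg : P.natDegree ≤ t) (hP0 : P.eval 0 = 1)
    (Q : Polynomial ℝ) (hQ : Q = P - Polynomial.X * P.derivative) :
    (∃ lam ∈ Set.Icc ℓ L, 2 / (ξ ^ t + ξ ^ (-(t : ℤ))) ≤ |Q.eval lam|) ∧
      ∀ d : ℕ, 1 ≤ d →
        ∃ (H : Matrix (Fin d) (Fin d) ℝ) (v : Fin d → ℝ),
          H.IsSymm ∧ (H - ℓ • 1).PosSemidef ∧ (L • 1 - H).PosSemidef ∧ v ≠ 0 ∧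
            (2 / (ξ ^ t + ξ ^ (-(t : ℤ)))) * euclNorm v ≤
              euclNorm (((Polynomial.aeval H) Q).mulVec v) := by
  have hL : 0 < L := lt_trans hℓ hℓL
  have hκ0 : 0 < κ := by rw [hκ]; positivity
  have hκ1 : κ < 1 := by rw [hκ]; rw [div_lt_one hL]; exact hℓL
  set sq := Real.sqrt κ with hsq
  have hs0 : 0 < sq := Real.sqrt_pos.mpr hκ0
  have hs1 : sq < 1 := by
    rw [hsq, show (1:ℝ) = Real.sqrt 1 by simp]
    exact Real.sqrt_lt_sqrt (le_of_lt hκ0) hκ1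
  have hs2 : sq ^ 2 = κ := Real.sq_sqrt (le_of_lt hκ0)
  have hξ0 : 0 < ξ := by rw [hξ]; apply div_pos <;> linarith
  have hzp : ξ ^ (-(t:ℤ)) = (ξ ^ t)⁻¹ := by rw [_root_.zpow_neg, zpow_natCast]
  have hu : 0 < ξ ^ t := pow_pos hξ0 t
  have hQ0' : Q.eval 0 = 1 := by rw [hQ]; simp [hP0]
  have key : ∃ lam ∈ Set.Icc ℓ L, 2 / (ξ ^ t + ξ ^ (-(t : ℤ))) ≤ |Q.eval lam| := by
    rcases Nat.eq_zero_or_pos t with rfl | ht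
    · refine ⟨ℓ, ⟨le_refl _, le_of_lt hℓL⟩, ?_⟩
      have hPdeg : P.natDegree = 0 := Nat.le_zero.mp hdeg
      obtain ⟨x, hx⟩ := Polynomial.natDegree_eq_zero.mp hPdeg
      have hQℓ : Q.eval ℓ = 1 := by
        rw [hQ, ← hx]
        simp only [Polynomial.derivative_C, mul_zero, sub_zero, Polynomial.eval_C]
        rw [← hx] at hP0
        simpa using hP0
      rw [hQℓ]
      norm_num
    · -- degree bound for Q
      have hQdeg : Q.natDegree ≤ t := by
        have h1 : Q.natDegree ≤ max P.natDegree (Polynomial.X * P.derivative).natDegree := by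
          rw [hQ]; exact Polynomial.natDegree_sub_le _ _
        have h2 : (Polynomial.X * P.derivative).natDegree ≤ 1 + P.derivative.natDegree := by
          simpa using Polynomial.natDegree_mul_le
            (p := (Polynomial.X : Polynomial ℝ)) (q := P.derivative)
        have h3 := P.natDegree_derivative_le
        omega
      -- value of the Chebyshev polynomial at σ
      have hℓeq : ℓ = sq ^ 2 * L := by rw [hs2, hκ]; field_simp
      have hσ : (ξ + ξ⁻¹) / 2 = (L + ℓ) / (L - ℓ) := by
        rw [hξ, hℓeq]
        have h1 : (1:ℝ) + sq ≠ 0 := by positivity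
        have h2 : (1:ℝ) - sq ≠ 0 := by intro h; nlinarith
        have h3 : L - sq ^ 2 * L ≠ 0 := by nlinarith
        field_simp
        have h4 : (1:ℝ) - sq ^ 2 ≠ 0 := by intro h; nlinarith
        field_simp
        ring
      have hMval : (T ℝ t).eval ((L + ℓ) / (L - ℓ)) = (ξ ^ t + (ξ ^ t)⁻¹) / 2 := by
        rw [← hσ, ← Real.cosh_log hξ0, UnrollAux.T_real_cosh]
        rw [Real.cosh_eq]
        have h1 : Real.exp (((t:ℤ):ℝ) * Real.log ξ) = ξ ^ t := by
          push_cast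
          rw [Real.exp_nat_mul, Real.exp_log hξ0]
        rw [Real.exp_neg, h1]
      have husum : 0 < ξ ^ t + (ξ ^ t)⁻¹ := by positivity
      have hc : 0 < 2 / (ξ ^ t + (ξ ^ t)⁻¹) := by positivity
      have hcM : 2 / (ξ ^ t + (ξ ^ t)⁻¹) * (T ℝ t).eval ((L + ℓ) / (L - ℓ)) = 1 := by
        rw [hMval]; field_simp
      rw [hzp]
      exact cheb_lower ℓ L hℓ hℓL t ht Q hQdeg hQ0' _ hc hcM
  refine ⟨key, ?_⟩
  obtain ⟨lam, hlamIcc, hlamBd⟩ := key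
  intro d hd
  refine ⟨lam • 1, Pi.single ⟨0, hd⟩ 1, ?_, ?_, ?_, ?_, ?_⟩
  · simp [Matrix.IsSymm]
  · have h : lam • (1 : Matrix (Fin d) (Fin d) ℝ) - ℓ • 1 = (lam - ℓ) • 1 :=
      (sub_smul lam ℓ 1).symm
    rw [h, Matrix.smul_one_eq_diagonal]
    exact Matrix.PosSemidef.diagonal (by intro i; simp only [Pi.zero_apply]; linarith [hlamIcc.1])
  · have h : L • (1 : Matrix (Fin d) (Fin d) ℝ) - lam • 1 = (L - lam) • 1 :=
      (sub_smul L lam 1).symm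
    rw [h, Matrix.smul_one_eq_diagonal]
    exact Matrix.PosSemidef.diagonal (by intro i; simp only [Pi.zero_apply]; linarith [hlamIcc.2])
  · intro h
    have := congrFun h ⟨0, hd⟩
    simp at this
  · have hHalg : lam • (1 : Matrix (Fin d) (Fin d) ℝ) = algebraMap ℝ _ lam :=
      (Algebra.algebraMap_eq_smul_one lam).symm
    rw [hHalg, Polynomial.aeval_algebraMap_apply_eq_algebraMap_eval,
      Algebra.algebraMap_eq_smul_one, Matrix.smul_mulVec, Matrix.one_mulVec,
      euclNorm_smul]
    exact mul_le_mul_of_nonneg_right hlamBd (Real.sqrt_nonneg _)
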